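/- The projector e_s admits the rank-one factorization e_s = (1/(1+s²)) · v · w, where v is the column vector (α+sβ, γ+sδ)ᵗ and w is the row vector (δ - qsγ, sα - q^{-1}β); that is, each entry (e_s)_{ij} equals (1/(1+s²)) v_i w_j. -/
import Mathlib


open scoped TensorProduct

/-- ξ = s(α² - q⁻¹β²) + (s²-1)q⁻¹αβ -/
def xiE {k A : Type*} [Field k] [Ring A] [Algebra k A] (q s : k) (α β : A) : A :=
  s • (α^2) - (s*q⁻¹) • (β^2) + ((s^2-1)*q⁻¹) • (α*β)

/-- η = s(qγ² - δ²) + (s²-1)γδ -/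
def etaE {k A : Type*} [Field k] [Ring A] [Algebra k A] (q s : k) (γ δ : A) : A :=
  (s*q) • (γ^2) - s • (δ^2) + (s^2-1) • (γ*δ)

/-- ζ = s(qαγ - βδ) + (s²-1)qβγ -/
def zetaE {k A : Type*} [Field k] [Ring A] [Algebra k A] (q s : k) (α β γ δ : A) : A :=
  (s*q) • (α*γ) - s • (β*δ) + ((s^2-1)*q) • (β*γ)

/-- The projector e_s = (1/(1+s²)) [[1-ζ, ξ],[-η, s²+q⁻²ζ]] -/
def esMat {k A : Type*} [Field k] [Ring A] [Algebra k A] (q s : k) (α β γ δ : A) :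
    Matrix (Fin 2) (Fin 2) A :=
  (1+s^2)⁻¹ • !![1 - zetaE q s α β γ δ, xiE q s α β;
                 -etaE q s γ δ, (s^2) • (1:A) + (q^2)⁻¹ • zetaE q s α β γ δ]

/-- The right ideal J_s = {ξ-s, η+s, ζ}·SU_q(2) -/
def Jideal {k A : Type*} [Field k] [Ring A] [Algebra k A] (q s : k) (α β γ δ : A) : Set A :=
  {z | ∃ p₁ p₂ p₃ : A, z = (xiE q s α β - s • 1) * p₁ + (etaE q s γ δ + s • 1) * p₂ +
      zetaE q s α β γ δ * p₃}

theorem stmt3 {k A : Type*} [Field k] [Ring A] [Algebra k A]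
    (q s : k) (α β γ δ : A)
    (h1 : α*β = q • (β*α)) (h2 : α*γ = q • (γ*α)) (h3 : β*γ = γ*β)
    (h4 : β*δ = q • (δ*β)) (h5 : γ*δ = q • (δ*γ))
    (h6 : α*δ = δ*α + (q - q⁻¹) • (β*γ)) (h7 : α*δ - q • (β*γ) = 1)
    (hq : q ≠ 0) (hs : (1:k) + s^2 ≠ 0) :
    ∀ i j : Fin 2, esMat q s α β γ δ i j =
      (1 + s^2)⁻¹ • (![α + s • β, γ + s • δ] i * ![δ - (q*s) • γ, s • α - q⁻¹ • β] j) := by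

  have hba : β*α = q⁻¹ • (α*β) := by
    rw [h1, smul_smul, inv_mul_cancel₀ hq, one_smul]
  have hga : γ*α = q⁻¹ • (α*γ) := by
    rw [h2, smul_smul, inv_mul_cancel₀ hq, one_smul]
  have hdg : δ*γ = q⁻¹ • (γ*δ) := by
    rw [h5, smul_smul, inv_mul_cancel₀ hq, one_smul]
  have hdb : δ*β = q⁻¹ • (β*δ) := by
    rw [h4, smul_smul, inv_mul_cancel₀ hq, one_smul]
  have had : α*δ = 1 + q • (β*γ) := by rw [← h7]; abel
  have hda : δ*α = 1 + q⁻¹ • (β*γ) := by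
    have h := eq_sub_of_add_eq h6.symm
    rw [h, had]
    match_scalars
    all_goals try ring
    all_goals (field_simp; try ring)
  have hA : (α + s • β) * (δ - (q*s) • γ) = 1 - zetaE q s α β γ δ := by
    simp only [zetaE, mul_sub, sub_mul, add_mul, mul_add, smul_mul_assoc, mul_smul_comm,
      smul_smul, had, hda, hdg, hdb, hba, hga, h3, smul_add]
    match_scalars
    all_goals try ring
    all_goals (field_simp; try ring)
  have hB : (α + s • β) * (s • α - q⁻¹ • β) = xiE q s α β := by
    simp only [xiE, pow_two, mul_sub, sub_mul, add_mul, mul_add, smul_mul_assoc, mul_smul_comm,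
      smul_smul, had, hda, hdg, hdb, hba, hga, h3, smul_add]
    match_scalars
    all_goals try ring
    all_goals (field_simp; try ring)
  have hC : (γ + s • δ) * (δ - (q*s) • γ) = -(etaE q s γ δ) := by
    simp only [etaE, pow_two, mul_sub, sub_mul, add_mul, mul_add, neg_add, neg_sub,
      smul_mul_assoc, mul_smul_comm, smul_smul, had, hda, hdg, hdb, hba, hga, h3, smul_add]
    match_scalars
    all_goals try ring
    all_goals (field_simp; try ring)
  have hD : (γ + s • δ) * (s • α - q⁻¹ • β) =
      (s^2) • (1:A) + (q^2)⁻¹ • zetaE q s α β γ δ := by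
    simp only [zetaE, mul_sub, sub_mul, add_mul, mul_add, smul_mul_assoc, mul_smul_comm,
      smul_smul, had, hda, hdg, hdb, hba, hga, h3, smul_add, smul_sub]
    match_scalars
    all_goals try ring
    all_goals (field_simp; try ring)
  intro i j
  fin_cases i <;> fin_cases j <;>
    simp only [esMat, Matrix.smul_apply, Matrix.of_apply, Matrix.cons_val', Matrix.cons_val_zero,
      Matrix.cons_val_one, Matrix.head_cons, Matrix.empty_val', Matrix.cons_val_fin_one,
      Matrix.head_fin_const, Fin.isValue, Fin.zero_eta, Fin.mk_one] <;>
    first | rw [hA] | rw [hB] | rw [hC] | rw [hD]
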